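/- Let a, c be integers with 0 < a < c and gcd(a,c) = 1. Then the tetrahedron T_{a,c−a,c} with vertices (0,0,0), (1,0,0), (0,1,0), (a,c−a,c) is empty. -/
import Mathlib


/-- A point of `ℝ³` is a lattice point if all of its coordinates are integers. -/
def IsLatticePt (x : Fin 3 → ℝ) : Prop := ∀ i, ∃ m : ℤ, x i = (m : ℝ)

/-- The tetrahedron `T_{a,b,c}`: the convex hull of `(0,0,0)`, `(1,0,0)`, `(0,1,0)`, `(a,b,c)`. -/
def Tet (a b c : ℤ) : Set (Fin 3 → ℝ) :=
  convexHull ℝ {![0,0,0], ![1,0,0], ![0,1,0], ![(a : ℝ), (b : ℝ), (c : ℝ)]}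

/-- `T_{a,b,c}` is an empty lattice tetrahedron: it contains no point of `ℤ³`
other than its four vertices. -/
def TetIsEmpty (a b c : ℤ) : Prop :=
  ∀ x ∈ Tet a b c, IsLatticePt x →
    x = ![0,0,0] ∨ x = ![1,0,0] ∨ x = ![0,1,0] ∨ x = ![(a : ℝ), (b : ℝ), (c : ℝ)]

set_option maxHeartbeats 1600000 in
/-- If `0 < a < c` and `gcd(a,c) = 1`, then the tetrahedron `T_{a,c-a,c}` with
vertices `(0,0,0)`, `(1,0,0)`, `(0,1,0)`, `(a,c-a,c)` is empty. -/
theorem stmt_12 (a c : ℤ) (ha : 0 < a) (hac : a < c)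
    (hg : Int.gcd a c = 1) :
    TetIsEmpty a (c - a) c := by
  intro x hx hlat
  obtain ⟨m0, h0⟩ := hlat 0
  obtain ⟨m1, h1⟩ := hlat 1
  obtain ⟨m2, h2⟩ := hlat 2
  have hc : (0 : ℤ) < c := ha.trans hac
  have hcR : (0 : ℝ) < c := by exact_mod_cast hc
  have haR : (0 : ℝ) < a := by exact_mod_cast ha
  have hacR : (a : ℝ) < c := by exact_mod_cast hac
  set S : Set (Fin 3 → ℝ) :=
    {y | 0 ≤ y 2 ∧ (a : ℝ) * y 2 ≤ c * y 0 ∧ ((c : ℝ) - a) * y 2 ≤ c * y 1 ∧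
      (c : ℝ) * y 0 + c * y 1 ≤ c + ((c : ℝ) - 1) * y 2} with hSdef
  have hconv : Convex ℝ S := by
    intro p hp q hq s t hs ht hst
    obtain ⟨hp1, hp2, hp3, hp4⟩ := hp
    obtain ⟨hq1, hq2, hq3, hq4⟩ := hq
    refine ⟨?_, ?_, ?_, ?_⟩ <;>
      simp only [Pi.add_apply, Pi.smul_apply, smul_eq_mul] <;> nlinarith
  have hsub : Tet a (c - a) c ⊆ S := by
    apply convexHull_min _ hconv
    intro y hy
    simp only [Set.mem_insert_iff, Set.mem_singleton_iff] at hy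
    rcases hy with rfl | rfl | rfl | rfl <;>
      refine ⟨?_, ?_, ?_, ?_⟩ <;> simp <;> push_cast <;> nlinarith
  obtain ⟨hy1, hy2, hy3, hy4⟩ := hsub hx
  simp only [h0, h1, h2] at hy1 hy2 hy3 hy4
  have i1 : (0 : ℤ) ≤ m2 := by exact_mod_cast hy1
  have i2 : a * m2 ≤ c * m0 := by exact_mod_cast hy2
  have i3 : (c - a) * m2 ≤ c * m1 := by exact_mod_cast hy3
  have i4 : c * m0 + c * m1 ≤ c + (c - 1) * m2 := by exact_mod_cast hy4
  have i3' : c * m2 - a * m2 ≤ c * m1 := by linear_combination i3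
  have i4' : c * m0 + c * m1 ≤ c + c * m2 - m2 := by linear_combination i4
  have hs0 : 0 ≤ m0 + m1 - m2 := by
    have h : c * 0 ≤ c * (m0 + m1 - m2) := by nlinarith [i2, i3']
    have := le_of_mul_le_mul_left h hc
    linarith
  have hs1 : m0 + m1 - m2 ≤ 1 := by
    have h : c * (m0 + m1 - m2) ≤ c * 1 := by nlinarith [i4', i1]
    exact le_of_mul_le_mul_left h hc
  have heq : x = fun i => ((![m0, m1, m2] i : ℤ) : ℝ) := by
    funext i; fin_cases i <;> simpa using by assumption
  rcases (by omega : m0 + m1 - m2 = 0 ∨ m0 + m1 - m2 = 1) with h | h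
  · -- s = 0 : vertex 0 or (a, c-a, c)
    have hcm : c * m0 + c * m1 = c * m2 := by linear_combination c * h
    have hsum : c * m0 = a * m2 := by linarith [i2, i3', hcm]
    have hle : m2 ≤ c := by linarith [hcm, i4']
    have hdvd : c ∣ m2 := by
      have hcop : IsCoprime (c : ℤ) a := by
        rw [Int.isCoprime_iff_gcd_eq_one, Int.gcd_comm]; exact hg
      exact hcop.dvd_of_dvd_mul_left ⟨m0, by linarith [hsum]⟩
    have hm2' : m2 = 0 ∨ m2 = c := by
      obtain ⟨k, hk⟩ := hdvd
      have hk0 : 0 ≤ k :=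
        le_of_mul_le_mul_left (by rw [← hk]; simpa using i1) hc
      have hk1 : k ≤ 1 :=
        le_of_mul_le_mul_left (by rw [← hk]; simpa using hle) hc
      rcases (by omega : k = 0 ∨ k = 1) with rfl | rfl
      · left; simpa using hk
      · right; simpa using hk
    rcases hm2' with hm2 | hm2
    · left
      have hm0 : m0 = 0 := by
        have h' : c * m0 = c * 0 := by rw [hsum, hm2]; ring
        exact mul_left_cancel₀ hc.ne' h'
      have hm1 : m1 = 0 := by omega
      rw [heq]; funext i; fin_cases i <;> simp [hm0, hm1, hm2]
    · right; right; right
      have hm0 : m0 = a := by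
        have h' : c * m0 = c * a := by rw [hsum, hm2]; ring
        exact mul_left_cancel₀ hc.ne' h'
      have hm1 : m1 = c - a := by omega
      rw [heq]; funext i; fin_cases i <;> simp [hm0, hm1, hm2]
  · -- s = 1 : vertex (1,0,0) or (0,1,0)
    have hcm : c * m0 + c * m1 = c * m2 + c := by linear_combination c * h
    have hm2 : m2 = 0 := by linarith [i4', hcm, i1]
    have hm0 : 0 ≤ m0 := by
      have h' : c * 0 ≤ c * m0 := by nlinarith [i2, hm2]
      exact le_of_mul_le_mul_left h' hc
    have hm1 : 0 ≤ m1 := by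
      have h' : c * 0 ≤ c * m1 := by nlinarith [i3', hm2]
      exact le_of_mul_le_mul_left h' hc
    rcases (by omega : (m0 = 1 ∧ m1 = 0) ∨ (m0 = 0 ∧ m1 = 1)) with ⟨e0, e1⟩ | ⟨e0, e1⟩
    · right; left; rw [heq]; funext i; fin_cases i <;> simp [e0, e1, hm2]
    · right; right; left; rw [heq]; funext i; fin_cases i <;> simp [e0, e1, hm2]
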